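/- Let α, β, λ, C₂, b > 0 be real constants and let p < 0. Define on ℝ² \ {0}: ρ(x) = (α/(βλ))·(C₂·‖x‖^p − 1), g(x) = λ·ρ(x), and V(x₁, x₂) = K·‖x‖^{p/2 − 1}·(−x₂, x₁) with K = √(−(b·α/β)·C₂·p). Then for every x ≠ 0: (i) the directional derivative of ρ at x in the direction V(x) equals 0, and the divergence at x of the flux field x ↦ ∇ρ(x) − ρ(x)·(β/(α + β·g(x)))·∇g(x) equals 0, so the steady density equation V·∇ρ = ∇·(∇ρ − ρ(β/(α+βg))∇g) holds; (ii) λ·ρ(x) − g(x) = 0; and (iii) the Fréchet derivative of V at x applied to V(x) equals b·∇g(x), i.e. (V·∇)V = b·∇g. -/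

import Mathlib

open InnerProductSpace

noncomputable section

theorem myHasFDerivAt_norm_rpow {x : EuclideanSpace ℝ (Fin 2)} (hx : x ≠ 0) (q : ℝ) :
    HasFDerivAt (fun y : EuclideanSpace ℝ (Fin 2) => ‖y‖ ^ q)
      ((q * ‖x‖ ^ (q - 2)) • innerSL ℝ x) x := by
  have hpos : (0:ℝ) < ‖x‖ := norm_pos_iff.mpr hx
  have h1 : HasDerivAt (fun t : ℝ => t ^ (q/2)) ((q/2) * (‖x‖^2) ^ (q/2 - 1)) (‖x‖^2) :=
    Real.hasDerivAt_rpow_const (Or.inl (by positivity))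
  have h3 := h1.comp_hasFDerivAt x (hasStrictFDerivAt_norm_sq x).hasFDerivAt
  have hfun : ((fun t : ℝ => t ^ (q/2)) ∘ (fun y : EuclideanSpace ℝ (Fin 2) => ‖y‖^2))
      = fun y : EuclideanSpace ℝ (Fin 2) => ‖y‖ ^ q := by
    funext y
    show ((‖y‖^2 : ℝ)) ^ (q/2) = _
    rw [← Real.rpow_natCast ‖y‖ 2, ← Real.rpow_mul (norm_nonneg y)]
    norm_num
    rw [show (2:ℝ)*(q/2) = q by ring]
  rw [hfun] at h3
  have hc : (‖x‖^2 : ℝ) ^ (q/2 - 1) = ‖x‖ ^ (q - 2) := by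
    rw [← Real.rpow_natCast ‖x‖ 2, ← Real.rpow_mul (norm_nonneg x)]
    norm_num
    rw [show (2:ℝ)*(q/2-1) = q-2 by ring]
  rw [hc] at h3
  refine h3.congr_fderiv ?_
  ext v
  simp only [ContinuousLinearMap.smul_apply, smul_eq_mul, two_smul,
    ContinuousLinearMap.add_apply]
  ring

def myRotLin : EuclideanSpace ℝ (Fin 2) →ₗ[ℝ] EuclideanSpace ℝ (Fin 2) where
  toFun x := (WithLp.toLp 2 (![-(x 1), x 0] : Fin 2 → ℝ) : EuclideanSpace ℝ (Fin 2))
  map_add' u v := by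
    ext i
    fin_cases i <;>
      simp [PiLp.add_apply, Matrix.cons_val_zero, Matrix.cons_val_one, Matrix.head_cons] <;> ring
  map_smul' c u := by
    ext i
    fin_cases i <;>
      simp [PiLp.smul_apply, Matrix.cons_val_zero, Matrix.cons_val_one, Matrix.head_cons,
        smul_eq_mul]

def myRot : EuclideanSpace ℝ (Fin 2) →L[ℝ] EuclideanSpace ℝ (Fin 2) :=
  LinearMap.toContinuousLinearMap myRotLin

theorem myRot_apply (y : EuclideanSpace ℝ (Fin 2)) :
    myRot y = (WithLp.toLp 2 (![-(y 1), y 0] : Fin 2 → ℝ) : EuclideanSpace ℝ (Fin 2)) := rfl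

theorem myRot_rot (y : EuclideanSpace ℝ (Fin 2)) : myRot (myRot y) = -y := by
  ext i
  rw [myRot_apply, myRot_apply]
  fin_cases i <;> simp

theorem myInner_rot (y : EuclideanSpace ℝ (Fin 2)) : ⟪y, myRot y⟫_ℝ = 0 := by
  rw [myRot_apply]
  simp [PiLp.inner_apply, Fin.sum_univ_two, RCLike.inner_apply, conj_trivial]
  ring

theorem myTrace_formula (f : EuclideanSpace ℝ (Fin 2) →ₗ[ℝ] EuclideanSpace ℝ (Fin 2)) :
    LinearMap.trace ℝ (EuclideanSpace ℝ (Fin 2)) f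
      = f (EuclideanSpace.single 0 1) 0 + f (EuclideanSpace.single 1 1) 1 := by
  rw [LinearMap.trace_eq_matrix_trace ℝ ((EuclideanSpace.basisFun (Fin 2) ℝ).toBasis)]
  rw [Matrix.trace, Fin.sum_univ_two]
  simp [Matrix.diag, LinearMap.toMatrix_apply, OrthonormalBasis.coe_toBasis,
    OrthonormalBasis.coe_toBasis_repr_apply, EuclideanSpace.basisFun_apply,
    EuclideanSpace.basisFun_repr]


set_option maxHeartbeats 1000000 in
/-- The rotationally symmetric "death spiral" configuration
`ρ(x) = (α/(βλ))(C₂‖x‖^p - 1)`, `g = λρ`,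
`V(x) = K‖x‖^{p/2-1}·(-x₂, x₁)` with `K = √(-(bα/β)C₂p)` is a
time-independent solution of the full two-dimensional diffusion-advection
system: for every `x ≠ 0`,
(i) `V·∇ρ = 0` and the divergence of the flux `∇ρ - ρ(β/(α+βg))∇g` vanishes,
so the steady density equation `V·∇ρ = ∇·(∇ρ - ρ(β/(α+βg))∇g)` holds;
(ii) `λρ(x) - g(x) = 0`; (iii) `(V·∇)V (x) = DV(x)[V(x)] = b∇g(x)`. -/
theorem stmt16 (α β lam C₂ b p : ℝ) (hα : 0 < α) (hβ : 0 < β) (hlam : 0 < lam)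
    (hC₂ : 0 < C₂) (hb : 0 < b) (hp : p < 0)
    (ρ g : EuclideanSpace ℝ (Fin 2) → ℝ)
    (V : EuclideanSpace ℝ (Fin 2) → EuclideanSpace ℝ (Fin 2))
    (hρ : ∀ x : EuclideanSpace ℝ (Fin 2),
      ρ x = (α / (β * lam)) * (C₂ * ‖x‖ ^ p - 1))
    (hg : ∀ x : EuclideanSpace ℝ (Fin 2), g x = lam * ρ x)
    (hV : ∀ x : EuclideanSpace ℝ (Fin 2),
      V x = (Real.sqrt (-(b * α / β) * C₂ * p) * ‖x‖ ^ (p / 2 - 1))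
        • (WithLp.toLp 2 (![-(x 1), x 0] : Fin 2 → ℝ) : EuclideanSpace ℝ (Fin 2))) :
    ∀ x : EuclideanSpace ℝ (Fin 2), x ≠ 0 →
      (fderiv ℝ ρ x (V x) = 0 ∧
        LinearMap.trace ℝ (EuclideanSpace ℝ (Fin 2))
          (fderiv ℝ (fun y : EuclideanSpace ℝ (Fin 2) =>
            gradient ρ y - (ρ y * (β / (α + β * g y))) • gradient g y)
              x).toLinearMap = 0) ∧
      lam * ρ x - g x = 0 ∧
      fderiv ℝ V x (V x) = b • gradient g x := by
  intro x hx
  have hpos : (0:ℝ) < ‖x‖ := norm_pos_iff.mpr hx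
  set A := α / (β * lam) with hA
  have hρfun : ρ = fun y : EuclideanSpace ℝ (Fin 2) => A * (C₂ * ‖y‖ ^ p - 1) := funext hρ
  have hgfun : g = fun y : EuclideanSpace ℝ (Fin 2) => (lam * A) * (C₂ * ‖y‖ ^ p - 1) := by
    funext y; rw [hg, hρ]; ring
  have key : ∀ (a : ℝ) {y : EuclideanSpace ℝ (Fin 2)}, y ≠ 0 →
      HasFDerivAt (fun z : EuclideanSpace ℝ (Fin 2) => a * (C₂ * ‖z‖ ^ p - 1))
        ((a * C₂ * p * ‖y‖ ^ (p - 2)) • innerSL ℝ y) y := by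
    intro a y hy
    have h := ((myHasFDerivAt_norm_rpow hy p).const_mul (a * C₂)).sub_const a
    have hf : (fun z : EuclideanSpace ℝ (Fin 2) => a * C₂ * ‖z‖ ^ p - a)
        = fun z => a * (C₂ * ‖z‖ ^ p - 1) := by funext z; ring
    rw [hf] at h
    refine h.congr_fderiv ?_
    rw [smul_smul]
    ring_nf
  have gradkey : ∀ (a : ℝ) {y : EuclideanSpace ℝ (Fin 2)}, y ≠ 0 →
      HasGradientAt (fun z : EuclideanSpace ℝ (Fin 2) => a * (C₂ * ‖z‖ ^ p - 1))
        ((a * C₂ * p * ‖y‖ ^ (p - 2)) • y) y := by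
    intro a y hy
    rw [hasGradientAt_iff_hasFDerivAt]
    refine (key a hy).congr_fderiv ?_
    ext v
    simp [toDual_apply_apply, real_inner_smul_left]
  have gradρ : ∀ {y : EuclideanSpace ℝ (Fin 2)}, y ≠ 0 →
      gradient ρ y = (A * C₂ * p * ‖y‖ ^ (p - 2)) • y := by
    intro y hy; rw [hρfun]; exact (gradkey A hy).gradient
  have gradg : ∀ {y : EuclideanSpace ℝ (Fin 2)}, y ≠ 0 →
      gradient g y = ((lam * A) * C₂ * p * ‖y‖ ^ (p - 2)) • y := by
    intro y hy; rw [hgfun]; exact (gradkey (lam * A) hy).gradient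
  refine ⟨⟨?_, ?_⟩, ?_, ?_⟩
  · -- V·∇ρ = 0
    have hd : HasFDerivAt ρ ((A * C₂ * p * ‖x‖ ^ (p - 2)) • innerSL ℝ x) x := by
      rw [hρfun]; exact key A hx
    rw [hd.fderiv, hV x, ← myRot_apply]
    rw [ContinuousLinearMap.smul_apply, innerSL_apply_apply, real_inner_smul_right, myInner_rot]
    simp
  · -- divergence of flux vanishes
    set c := A * p with hc
    have heq : (fun y : EuclideanSpace ℝ (Fin 2) =>
        gradient ρ y - (ρ y * (β / (α + β * g y))) • gradient g y) =ᶠ[nhds x]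
        (fun y : EuclideanSpace ℝ (Fin 2) => (c * ‖y‖ ^ ((-2):ℝ)) • y) := by
      filter_upwards [eventually_ne_nhds hx] with y hy
      have hpy : (0:ℝ) < ‖y‖ := norm_pos_iff.mpr hy
      have ht : (0:ℝ) < ‖y‖ ^ p := Real.rpow_pos_of_pos hpy p
      have hden : α + β * g y = α * (C₂ * ‖y‖ ^ p) := by
        rw [hg, hρ, hA]; field_simp; ring
      rw [gradρ hy, gradg hy, hρ y, hden, smul_smul, ← sub_smul]
      congr 1
      have hsplit : ‖y‖ ^ (p - 2) = ‖y‖ ^ p * ‖y‖ ^ ((-2):ℝ) := by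
        rw [← Real.rpow_add hpy]; ring_nf
      rw [hsplit, hc, hA]
      field_simp
      ring
    rw [heq.fderiv_eq]
    have h1 : HasFDerivAt (fun y : EuclideanSpace ℝ (Fin 2) => c * ‖y‖ ^ ((-2):ℝ))
        ((c * ((-2) * ‖x‖ ^ ((-2:ℝ) - 2))) • innerSL ℝ x) x := by
      have := (myHasFDerivAt_norm_rpow hx (-2)).const_mul c
      rwa [smul_smul] at this
    have hGd : HasFDerivAt (fun y : EuclideanSpace ℝ (Fin 2) => (c * ‖y‖ ^ ((-2):ℝ)) • y)
        ((c * ‖x‖ ^ ((-2):ℝ)) • ContinuousLinearMap.id ℝ (EuclideanSpace ℝ (Fin 2)) +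
          ((c * ((-2) * ‖x‖ ^ ((-2:ℝ) - 2))) • innerSL ℝ x).smulRight x) x :=
      h1.smul (hasFDerivAt_id x)
    rw [hGd.fderiv, myTrace_formula]
    simp only [ContinuousLinearMap.coe_coe, ContinuousLinearMap.add_apply,
      ContinuousLinearMap.smul_apply, ContinuousLinearMap.id_apply,
      ContinuousLinearMap.smulRight_apply, innerSL_apply_apply, PiLp.add_apply,
      PiLp.smul_apply, smul_eq_mul, EuclideanSpace.single_apply,
      PiLp.inner_apply, Fin.sum_univ_two, RCLike.inner_apply, conj_trivial]
    norm_num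
    have hxx : x 0 * x 0 + x 1 * x 1 = ‖x‖ ^ ((2:ℕ) : ℝ) := by
      rw [Real.rpow_natCast, EuclideanSpace.norm_eq, Real.sq_sqrt (by positivity)]
      simp [Fin.sum_univ_two, Real.norm_eq_abs, sq_abs]
      ring
    have hmul4 : ‖x‖ ^ ((-4):ℝ) * ‖x‖ ^ ((2:ℕ):ℝ) = ‖x‖ ^ ((-2):ℝ) := by
      rw [← Real.rpow_add hpos]; norm_num
    have h4 : ‖x‖ ^ ((-4):ℝ) = ‖x‖⁻¹ ^ 4 := by
      rw [Real.rpow_neg (norm_nonneg x), show ((4:ℝ)) = ((4:ℕ):ℝ) by norm_num, Real.rpow_natCast,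
        inv_pow]
    have h2 : ‖x‖ ^ ((-2):ℝ) = ‖x‖⁻¹ ^ 2 := by
      rw [Real.rpow_neg (norm_nonneg x), show ((2:ℝ)) = ((2:ℕ):ℝ) by norm_num, Real.rpow_natCast,
        inv_pow]
    linear_combination (2 * c * (x 0 ^ 2 + x 1 ^ 2)) * h4 - 2 * c * h2
      + (-2 * c * ‖x‖ ^ ((-4):ℝ)) * hxx + (-2 * c) * hmul4
  · rw [hg]; ring
  · -- (V·∇)V = b ∇g
    set K := Real.sqrt (-(b * α / β) * C₂ * p) with hK
    have hVfun : V = fun y : EuclideanSpace ℝ (Fin 2) =>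
        (K * ‖y‖ ^ (p / 2 - 1)) • myRot y := by
      funext y; rw [hV, myRot_apply]
    have h1 : HasFDerivAt (fun y : EuclideanSpace ℝ (Fin 2) => K * ‖y‖ ^ (p / 2 - 1))
        ((K * ((p / 2 - 1) * ‖x‖ ^ (p / 2 - 1 - 2))) • innerSL ℝ x) x := by
      have := (myHasFDerivAt_norm_rpow hx (p / 2 - 1)).const_mul K
      rwa [smul_smul] at this
    have hVd : HasFDerivAt V
        ((K * ‖x‖ ^ (p / 2 - 1)) • myRot +
          ((K * ((p / 2 - 1) * ‖x‖ ^ (p / 2 - 1 - 2))) • innerSL ℝ x).smulRight (myRot x)) x := by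
      rw [hVfun]; exact h1.smul (myRot.hasFDerivAt)
    rw [hVd.fderiv, gradg hx, hV x, ← myRot_apply]
    have hK2 : K * K = -(b * α / β) * C₂ * p := by
      rw [hK]
      refine Real.mul_self_sqrt ?_
      have h0 : (0:ℝ) < (b * α / β * C₂) * (-p) :=
        mul_pos (mul_pos (div_pos (mul_pos hb hα) hβ) hC₂) (neg_pos.mpr hp)
      nlinarith
    have hqq : ‖x‖ ^ (p / 2 - 1) * ‖x‖ ^ (p / 2 - 1) = ‖x‖ ^ (p - 2) := by
      rw [← Real.rpow_add hpos]; ring_nf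
    simp only [ContinuousLinearMap.add_apply, ContinuousLinearMap.smul_apply,
      ContinuousLinearMap.smulRight_apply, innerSL_apply_apply, map_smul, myRot_rot,
      real_inner_smul_right, myInner_rot, mul_zero, zero_smul, add_zero, smul_neg,
      smul_smul, smul_eq_mul, neg_smul]
    rw [← neg_smul]
    congr 1
    rw [show K * ‖x‖ ^ (p / 2 - 1) * (K * ‖x‖ ^ (p / 2 - 1))
      = (K * K) * (‖x‖ ^ (p / 2 - 1) * ‖x‖ ^ (p / 2 - 1)) by ring, hK2, hqq, hA]
    rw [show lam * (α / (β * lam)) = α / β by field_simp]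
    ring
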